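/- In the bounded-treewidth dynamic program for maximum-ink SPED, for an introduce node t of a nice tree decomposition with child t' and introduced vertex v, and any valid stub set S ⊆ S(X_t) containing (v, ℓ_i(v)), the table entry satisfies W(t, S) = W(t', S \ {(v, ℓ_i(v))}) + ℓ_i(v), where W(t, S) is the maximum ink of a valid stub set Ŝ with S ⊆ Ŝ ⊆ S(V_t) and Ŝ ∩ S(X_t) = S (and −∞ if none exists). -/

import Mathlib

open scoped Classical

/-- The stub pairs `(u, ℓ)` with `u ∈ A` and `ℓ` a candidate stub length of `u`. -/
noncomputable def stubPairs {V : Type*} (cand : V → Finset ℝ) (A : Finset V) :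
    Finset (V × ℝ) :=
  A.biUnion fun u => (cand u).image fun l => (u, l)

/-- A stub set over the vertex set `A` is valid if it contains exactly one candidate stub
pair per vertex of `A` and no two of its pairs intersect. -/
def ValidStubSet {V : Type*} (cand : V → Finset ℝ) (meets : V → ℝ → V → ℝ → Prop)
    (A : Finset V) (S : Finset (V × ℝ)) : Prop :=
  S ⊆ stubPairs cand A ∧ (∀ u ∈ A, ∃! l : ℝ, (u, l) ∈ S) ∧
  ∀ p ∈ S, ∀ q ∈ S, p.1 ≠ q.1 → ¬ meets p.1 p.2 q.1 q.2

/-- The ink of a stub set: the total stub length. -/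
noncomputable def inkOf {V : Type*} (S : Finset (V × ℝ)) : ℝ := ∑ p ∈ S, p.2

/-- The dynamic-programming table: `Wtab cand meets X Vt S` is the maximum ink of a valid
stub set `T` on `Vt` with `S ⊆ T` and `T ∩ S(X) = S` (and `⊥ = -∞` if none exists). -/
noncomputable def Wtab {V : Type*} (cand : V → Finset ℝ)
    (meets : V → ℝ → V → ℝ → Prop) (X Vt : Finset V) (S : Finset (V × ℝ)) : EReal :=
  sSup {x : EReal | ∃ T : Finset (V × ℝ), ValidStubSet cand meets Vt T ∧
    S ⊆ T ∧ T ∩ stubPairs cand X = S ∧ x = (inkOf T : EReal)}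

lemma mem_stubPairs {V : Type*} (cand : V → Finset ℝ) (A : Finset V) (u : V) (a : ℝ) :
    (u, a) ∈ stubPairs cand A ↔ u ∈ A ∧ a ∈ cand u := by
  simp only [stubPairs, Finset.mem_biUnion, Finset.mem_image, Prod.mk.injEq]
  constructor
  · rintro ⟨w, hw, b, hb, rfl, rfl⟩; exact ⟨hw, hb⟩
  · rintro ⟨hu, ha⟩; exact ⟨u, hu, a, ha, rfl, rfl⟩

lemma sSup_image_add_const (B : Set EReal) (c : ℝ) :
    sSup ((fun x => x + (c : EReal)) '' B) = sSup B + (c : EReal) := by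
  apply le_antisymm
  · apply sSup_le
    rintro x ⟨y, hy, rfl⟩
    exact add_le_add_left (le_sSup hy) _
  · apply (EReal.le_sub_iff_add_le (b := (c : EReal))
      (Or.inl (EReal.coe_ne_bot c)) (Or.inl (EReal.coe_ne_top c))).mp
    apply sSup_le
    intro x hx
    apply (EReal.le_sub_iff_add_le (b := (c : EReal))
      (Or.inl (EReal.coe_ne_bot c)) (Or.inl (EReal.coe_ne_top c))).mpr
    exact le_sSup ⟨x, hx, rfl⟩

/-- the introduce-node recurrence of the bounded-treewidth DP for MaxSPED.
At an introduce node `t` with child `t'`, we have `X_t = X_{t'} ∪ {v}`,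
`V_t = V_{t'} ∪ {v}`, and `v` has no neighbors in `V_{t'} \ X_{t'}` (expressed via
`meets`).  For any valid stub set `S ⊆ S(X_t)` containing `(v, ℓ)`,
`W(t, S) = W(t', S \ {(v, ℓ)}) + ℓ`. -/
theorem stmt_8 {V : Type*} (cand : V → Finset ℝ)
    (meets : V → ℝ → V → ℝ → Prop)
    (meets_symm : ∀ u a w b, meets u a w b → meets w b u a)
    (Xt' Vt' : Finset V) (hXV : Xt' ⊆ Vt')
    (v : V) (hv : v ∉ Vt')
    (Xt Vt : Finset V) (hXt : Xt = insert v Xt') (hVt : Vt = insert v Vt')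
    (hsep : ∀ u ∈ Vt' \ Xt', ∀ a b : ℝ, ¬ meets v a u b)
    (S : Finset (V × ℝ)) (hS : ValidStubSet cand meets Xt S)
    (l : ℝ) (hl : (v, l) ∈ S) :
    Wtab cand meets Xt Vt S = Wtab cand meets Xt' Vt' (S.erase (v, l)) + (l : EReal) := by
  classical
  subst hXt hVt
  obtain ⟨hSsub, hSuniq, hSmeet⟩ := hS
  have hvX' : v ∉ Xt' := fun h => hv (hXV h)
  have hlc : l ∈ cand v := ((mem_stubPairs cand _ v l).mp (hSsub hl)).2
  have hset : {x : EReal | ∃ T : Finset (V × ℝ),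
        ValidStubSet cand meets (insert v Vt') T ∧ S ⊆ T ∧
        T ∩ stubPairs cand (insert v Xt') = S ∧ x = (inkOf T : EReal)}
      = (fun x => x + (l : EReal)) ''
        {x : EReal | ∃ T : Finset (V × ℝ), ValidStubSet cand meets Vt' T ∧
          S.erase (v, l) ⊆ T ∧ T ∩ stubPairs cand Xt' = S.erase (v, l) ∧
          x = (inkOf T : EReal)} := by
    ext x
    constructor
    · rintro ⟨T, ⟨hTsub, hTuniq, hTmeet⟩, hST, hTX, rfl⟩
      have hvlT : (v, l) ∈ T := hST hl
      have hvuniq : ∀ a : ℝ, (v, a) ∈ T → a = l := by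
        intro a ha
        obtain ⟨b, _, hb⟩ := hTuniq v (Finset.mem_insert_self v Vt')
        rw [hb a ha, hb l hvlT]
      have hTv : ∀ p ∈ T.erase (v, l), p.1 ≠ v := by
        rintro ⟨u, a⟩ hp rfl
        exact (Finset.ne_of_mem_erase hp) (by
          rw [hvuniq a (Finset.mem_of_mem_erase hp)])
      refine ⟨(inkOf (T.erase (v, l)) : EReal), ⟨T.erase (v, l), ⟨?_, ?_, ?_⟩, ?_, ?_, rfl⟩, ?_⟩
      · rintro ⟨u, a⟩ hp
        have h1 := (mem_stubPairs cand _ u a).mp (hTsub (Finset.mem_of_mem_erase hp))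
        have hu : u ∈ Vt' := by
          rcases Finset.mem_insert.mp h1.1 with h | h
          · exact absurd h (hTv (u, a) hp)
          · exact h
        exact (mem_stubPairs cand _ u a).mpr ⟨hu, h1.2⟩
      · intro u hu
        obtain ⟨b, hb, hub⟩ := hTuniq u (Finset.mem_insert_of_mem hu)
        have hne : u ≠ v := fun h => hv (h ▸ hu)
        refine ⟨b, Finset.mem_erase.mpr ⟨by simp [hne], hb⟩, fun a ha => ?_⟩
        exact hub a (Finset.mem_of_mem_erase ha)
      · intro p hp q hq hpq
        exact hTmeet p (Finset.mem_of_mem_erase hp) q (Finset.mem_of_mem_erase hq) hpq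
      · exact Finset.erase_subset_erase _ hST
      · ext p
        constructor
        · intro hp
          obtain ⟨hp1, hp2⟩ := Finset.mem_inter.mp hp
          have hne : p.1 ≠ v := hTv p hp1
          have hpT : p ∈ T := Finset.mem_of_mem_erase hp1
          have h2 : p ∈ stubPairs cand (insert v Xt') := by
            obtain ⟨u, a⟩ := p
            have h1 := (mem_stubPairs cand _ u a).mp hp2
            exact (mem_stubPairs cand _ u a).mpr ⟨Finset.mem_insert_of_mem h1.1, h1.2⟩
          have hpS : p ∈ S := by rw [← hTX]; exact Finset.mem_inter.mpr ⟨hpT, h2⟩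
          refine Finset.mem_erase.mpr ⟨fun h => hne (by rw [h]), hpS⟩
        · intro hp
          obtain ⟨hne, hpS⟩ := Finset.mem_erase.mp hp
          obtain ⟨u, a⟩ := p
          have h1 := (mem_stubPairs cand _ u a).mp (hSsub hpS)
          have hune : u ≠ v := by
            rintro rfl
            obtain ⟨b, _, hb⟩ := hSuniq u (Finset.mem_insert_self u Xt')
            exact hne (by rw [hb a hpS, hb l hl])
          have huX' : u ∈ Xt' := (Finset.mem_insert.mp h1.1).resolve_left hune
          exact Finset.mem_inter.mpr ⟨Finset.mem_erase.mpr ⟨hne, hST hpS⟩,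
            (mem_stubPairs cand _ u a).mpr ⟨huX', h1.2⟩⟩
      · show (inkOf (T.erase (v, l)) : EReal) + (l : EReal) = (inkOf T : EReal)
        rw [← EReal.coe_add]
        norm_cast
        simpa [inkOf] using Finset.sum_erase_add T (fun p => p.2) hvlT
    · rintro ⟨x, ⟨T', ⟨hT'sub, hT'uniq, hT'meet⟩, hS'T, hT'X, rfl⟩, rfl⟩
      have hT'v : ∀ p ∈ T', p.1 ≠ v := by
        rintro ⟨u, a⟩ hp rfl
        exact hv ((mem_stubPairs cand _ u a).mp (hT'sub hp)).1
      have hvlT' : (v, l) ∉ T' := fun h => hT'v (v, l) h rfl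
      have hnomeet : ∀ p ∈ T', ¬ meets v l p.1 p.2 := by
        rintro ⟨u, a⟩ hp
        have hu : u ∈ Vt' := ((mem_stubPairs cand _ u a).mp (hT'sub hp)).1
        by_cases huX : u ∈ Xt'
        · have ha : a ∈ cand u := ((mem_stubPairs cand _ u a).mp (hT'sub hp)).2
          have : (u, a) ∈ S.erase (v, l) := by
            rw [← hT'X]
            exact Finset.mem_inter.mpr ⟨hp, (mem_stubPairs cand _ u a).mpr ⟨huX, ha⟩⟩
          exact hSmeet (v, l) hl (u, a) (Finset.mem_of_mem_erase this)
            (fun h => hv ((show v = u from h) ▸ hu))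
        · exact hsep u (Finset.mem_sdiff.mpr ⟨hu, huX⟩) l a
      refine ⟨insert (v, l) T', ⟨?_, ?_, ?_⟩, ?_, ?_, ?_⟩
      · rintro ⟨u, a⟩ hp
        rcases Finset.mem_insert.mp hp with h | h
        · rw [Prod.mk.injEq] at h
          obtain ⟨rfl, rfl⟩ := h
          exact (mem_stubPairs cand _ u a).mpr ⟨Finset.mem_insert_self u Vt', hlc⟩
        · have h1 := (mem_stubPairs cand _ u a).mp (hT'sub h)
          exact (mem_stubPairs cand _ u a).mpr ⟨Finset.mem_insert_of_mem h1.1, h1.2⟩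
      · intro u hu
        rcases Finset.mem_insert.mp hu with rfl | hu
        · refine ⟨l, Finset.mem_insert_self _ _, fun a ha => ?_⟩
          rcases Finset.mem_insert.mp ha with h | h
          · exact congrArg Prod.snd h
          · exact absurd h (fun h => hT'v (u, a) h rfl)
        · obtain ⟨b, hb, hub⟩ := hT'uniq u hu
          have hne : u ≠ v := fun h => hv (h ▸ hu)
          refine ⟨b, Finset.mem_insert_of_mem hb, fun a ha => ?_⟩
          rcases Finset.mem_insert.mp ha with h | h
          · exact absurd (congrArg Prod.fst h) hne
          · exact hub a h
      · intro p hp q hq hpq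
        rcases Finset.mem_insert.mp hp with rfl | hp
        · rcases Finset.mem_insert.mp hq with rfl | hq
          · exact absurd rfl hpq
          · exact hnomeet q hq
        · rcases Finset.mem_insert.mp hq with rfl | hq
          · exact fun h => hnomeet p hp (meets_symm _ _ _ _ h)
          · exact hT'meet p hp q hq hpq
      · intro p hp
        by_cases hpe : p = (v, l)
        · exact hpe ▸ Finset.mem_insert_self _ _
        · exact Finset.mem_insert_of_mem (hS'T (Finset.mem_erase.mpr ⟨hpe, hp⟩))
      · ext p
        constructor
        · intro hp
          obtain ⟨hpT, hpX⟩ := Finset.mem_inter.mp hp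
          rcases Finset.mem_insert.mp hpT with h | h
          · rw [h]; exact hl
          · have hne : p.1 ≠ v := hT'v p h
            obtain ⟨u, a⟩ := p
            have h1 := (mem_stubPairs cand _ u a).mp hpX
            have huX' : u ∈ Xt' := (Finset.mem_insert.mp h1.1).resolve_left hne
            have : (u, a) ∈ T' ∩ stubPairs cand Xt' :=
              Finset.mem_inter.mpr ⟨h, (mem_stubPairs cand _ u a).mpr ⟨huX', h1.2⟩⟩
            rw [hT'X] at this
            exact Finset.mem_of_mem_erase this
        · intro hpS
          refine Finset.mem_inter.mpr ⟨?_, hSsub hpS⟩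
          by_cases hpe : p = (v, l)
          · rw [hpe]; exact Finset.mem_insert_self _ _
          · exact Finset.mem_insert_of_mem (hS'T (Finset.mem_erase.mpr ⟨hpe, hpS⟩))
      · show (inkOf T' : EReal) + (l : EReal) = (inkOf (insert (v, l) T') : EReal)
        rw [← EReal.coe_add]
        norm_cast
        simp [inkOf, Finset.sum_insert hvlT', add_comm]
  show sSup _ = sSup _ + (l : EReal)
  rw [hset, sSup_image_add_const]
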